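/- Closed-form 2D OLCT of a Gaussian: for α₁, α₂ > 0 and f(t) = exp(−α₁ t₁² − α₂ t₂²), the 2D OLCT is O_{M₁M₂}[f](u) = exp( Σ_{r=1}^{2} (i/(2b_r)) (−2u_r(d_r τ_r − b_r η_r) + d_r u_r² + d_r τ_r²) ) · exp( Σ_{r=1}^{2} (−1/(2b_r)) (τ_r − u_r)² (2b_r α_r + i a_r)/(4 b_r² α_r² + a_r²) ) · (a₁ + 2iα₁b₁)^{−1/2} (a₂ + 2iα₂b₂)^{−1/2}, where the square roots are the principal branches. -/

import Mathlib

open MeasureTheory Real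

noncomputable section

/-- Parameters M = (a, b, c, d, τ, η) of an offset linear canonical transform. -/
structure OLCTParams where
  a : ℝ
  b : ℝ
  c : ℝ
  d : ℝ
  τ : ℝ
  η : ℝ

/-- The OLCT kernel K_M(u, t) = (1/√(2π i b)) exp((i/(2b))(a t² + 2t(τ−u) − 2u(dτ−bη) + d u² + d τ²)). -/
def olctKernel (M : OLCTParams) (u t : ℝ) : ℂ :=
  (((2 * Real.pi : ℝ) : ℂ) * Complex.I * (M.b : ℂ)) ^ (-(1 / 2 : ℂ)) *
    Complex.exp ((Complex.I / ((2 * M.b : ℝ) : ℂ)) *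
      ((M.a * t ^ 2 + 2 * t * (M.τ - u) - 2 * u * (M.d * M.τ - M.b * M.η)
          + M.d * u ^ 2 + M.d * M.τ ^ 2 : ℝ) : ℂ))

/-- The 2D OLCT: O_{M₁M₂} f (u) = ∫_{ℝ²} K_{M₁}(u₁,t₁) K_{M₂}(u₂,t₂) f(t) dt. -/
def olct (M₁ M₂ : OLCTParams) (f : ℝ × ℝ → ℂ) (u : ℝ × ℝ) : ℂ :=
  ∫ t : ℝ × ℝ, olctKernel M₁ u.1 t.1 * olctKernel M₂ u.2 t.2 * f t

lemma sq_cpow_half {z : ℂ} (hz : z ≠ 0) : z ^ (1/2:ℂ) * z ^ (1/2:ℂ) = z := by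
  rw [← Complex.cpow_add _ _ hz]; norm_num

lemma re_cpow_half_pos {z : ℂ} (hz : z ≠ 0) (harg : z.arg ≠ π) : 0 < (z ^ (1/2:ℂ)).re := by
  rw [Complex.cpow_def_of_ne_zero hz, Complex.exp_re]
  have h1 : -π < z.arg := Complex.neg_pi_lt_arg z
  have h2 : z.arg < π := lt_of_le_of_ne (Complex.arg_le_pi z) harg
  have him : (Complex.log z * (1/2:ℂ)).im = z.arg / 2 := by
    simp [Complex.mul_im, Complex.log_im]; ring
  rw [him]
  have hcos : 0 < Real.cos (z.arg / 2) := by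
    apply Real.cos_pos_of_mem_Ioo
    rw [Set.mem_Ioo]
    constructor <;> linarith
  exact mul_pos (Real.exp_pos _) hcos

lemma cpow_half_eq_of_sq {z s : ℂ} (h : s * s = z) (hs : 0 < s.re)
    (hz : 0 < (z ^ (1/2:ℂ)).re) : z ^ (1/2:ℂ) = s := by
  have hz0 : z ≠ 0 := by
    rintro rfl
    simp [Complex.zero_cpow (by norm_num : (1/2:ℂ) ≠ 0)] at hz
  have h2 : (z ^ (1/2:ℂ) - s) * (z ^ (1/2:ℂ) + s) = 0 := by
    have hsq := sq_cpow_half hz0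
    linear_combination hsq - h
  rcases mul_eq_zero.mp h2 with h' | h'
  · exact sub_eq_zero.mp h'
  · exfalso
    have he : z ^ (1/2:ℂ) = -s := by linear_combination h'
    have : (z ^ (1/2:ℂ)).re = -s.re := by rw [he]; simp
    linarith

lemma cpow_half_div {A B : ℂ} (hA : A ≠ 0) (hA' : 0 ≤ A.re) (hB : 0 < B.re) :
    A ^ (1/2:ℂ) * B ^ (-(1/2):ℂ) = (A / B) ^ (1/2:ℂ) := by
  have hB0 : B ≠ 0 := by
    intro h; rw [h] at hB; simp at hB
  have hAB : A / B ≠ 0 := div_ne_zero hA hB0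
  symm
  apply cpow_half_eq_of_sq
  · have e1 := sq_cpow_half hA
    have e2 : B ^ (-(1/2):ℂ) * B ^ (-(1/2):ℂ) = B⁻¹ := by
      rw [← Complex.cpow_add _ _ hB0]
      norm_num
      exact Complex.cpow_neg_one B
    calc A ^ (1/2:ℂ) * B ^ (-(1/2):ℂ) * (A ^ (1/2:ℂ) * B ^ (-(1/2):ℂ))
        = (A ^ (1/2:ℂ) * A ^ (1/2:ℂ)) * (B ^ (-(1/2):ℂ) * B ^ (-(1/2):ℂ)) := by ring
      _ = A * B⁻¹ := by rw [e1, e2]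
      _ = A / B := (div_eq_mul_inv A B).symm
  · -- 0 < re (A^(1/2) * B^(-1/2))
    rw [Complex.cpow_def_of_ne_zero hA, Complex.cpow_def_of_ne_zero hB0, ← Complex.exp_add,
      Complex.exp_re]
    have him : (Complex.log A * (1/2:ℂ) + Complex.log B * (-(1/2):ℂ)).im
        = A.arg / 2 - B.arg / 2 := by
      simp [Complex.add_im, Complex.mul_im, Complex.log_im]; ring
    rw [him]
    have hargA : |A.arg| ≤ π / 2 := Complex.abs_arg_le_pi_div_two_iff.mpr hA'
    have hargB : |B.arg| < π / 2 := Complex.abs_arg_lt_pi_div_two_iff.mpr (Or.inl hB)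
    have hcos : 0 < Real.cos (A.arg / 2 - B.arg / 2) := by
      apply Real.cos_pos_of_mem_Ioo
      rw [Set.mem_Ioo]
      rw [abs_le] at hargA
      rw [abs_lt] at hargB
      constructor <;> linarith [hargA.1, hargA.2, hargB.1, hargB.2]
    exact mul_pos (Real.exp_pos _) hcos
  · apply re_cpow_half_pos hAB
    intro hpi
    obtain ⟨hre, him⟩ := Complex.arg_eq_pi_iff.mp hpi
    have hABeq : A = (A / B) * B := by field_simp
    have hr : A / B = ((A / B).re : ℂ) := by
      apply Complex.ext <;> simp [him]
    rw [hr] at hABeq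
    have : A.re = (A / B).re * B.re := by
      conv_lhs => rw [hABeq]
      exact Complex.re_ofReal_mul _ _
    nlinarith

lemma cpow_neg_half_mul {A B : ℂ} (hA : A ≠ 0) (hA' : 0 ≤ A.re) (hB : 0 < B.re) :
    A ^ (-(1/2):ℂ) * B ^ ((1/2):ℂ) = (A / B) ^ (-(1/2):ℂ) := by
  have key := cpow_half_div hA hA' hB
  symm
  rw [Complex.cpow_neg, ← key, mul_inv, ← Complex.cpow_neg]
  congr 1
  rw [Complex.cpow_neg, inv_inv]

lemma olct1d (M : OLCTParams) (hb : M.b ≠ 0) (α : ℝ) (hα : 0 < α) (u : ℝ) :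
    ∫ t : ℝ, olctKernel M u t * Complex.exp (-(α : ℂ) * t ^ 2) =
      Complex.exp ((Complex.I / ((2 * M.b : ℝ) : ℂ)) *
          ((-2 * u * (M.d * M.τ - M.b * M.η) + M.d * u ^ 2 + M.d * M.τ ^ 2 : ℝ) : ℂ)) *
        Complex.exp ((((-1) / (2 * M.b) * (M.τ - u) ^ 2 : ℝ) : ℂ) *
            (((2 * M.b * α : ℝ) : ℂ) + Complex.I * (M.a : ℂ)) /
            (((4 * M.b ^ 2 * α ^ 2 + M.a ^ 2 : ℝ) : ℂ))) *
        ((M.a : ℂ) + 2 * Complex.I * (α : ℂ) * (M.b : ℂ)) ^ (-(1 / 2 : ℂ)) := by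
  have hbC : (M.b : ℂ) ≠ 0 := Complex.ofReal_ne_zero.mpr hb
  have hπ : (0:ℝ) < Real.pi := Real.pi_pos
  have hπC : ((Real.pi : ℝ) : ℂ) ≠ 0 := Complex.ofReal_ne_zero.mpr (ne_of_gt hπ)
  have hDpos : (0:ℝ) < 4 * M.b ^ 2 * α ^ 2 + M.a ^ 2 := by positivity
  have hD : ((4 * M.b ^ 2 * α ^ 2 + M.a ^ 2 : ℝ) : ℂ) ≠ 0 :=
    Complex.ofReal_ne_zero.mpr (ne_of_gt hDpos)
  set β : ℂ := Complex.I * ((M.a / (2 * M.b) : ℝ) : ℂ) - (α : ℂ) with hβdef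
  have hβre : β.re = -α := by
    rw [hβdef]
    simp only [Complex.sub_re, Complex.mul_re, Complex.I_re, Complex.I_im,
      Complex.ofReal_re, Complex.ofReal_im]
    ring
  have hβim : β.im = M.a / (2 * M.b) := by
    rw [hβdef]
    simp only [Complex.sub_im, Complex.mul_im, Complex.I_re, Complex.I_im,
      Complex.ofReal_re, Complex.ofReal_im]
    ring
  have hβlt : β.re < 0 := by rw [hβre]; linarith
  have hβ0 : β ≠ 0 := fun h => by rw [h] at hβlt; simp at hβlt
  set γ : ℂ := Complex.I * ((M.τ - u : ℝ) : ℂ) / (M.b : ℂ) with hγdef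
  set δ : ℂ := (Complex.I / ((2 * M.b : ℝ) : ℂ)) *
      ((-2 * u * (M.d * M.τ - M.b * M.η) + M.d * u ^ 2 + M.d * M.τ ^ 2 : ℝ) : ℂ) with hδdef
  have hne : Complex.I * (M.a:ℂ) - 2*(M.b:ℂ)*(α:ℂ) ≠ 0 := by
    have h2 : Complex.I * (M.a:ℂ) - 2*(M.b:ℂ)*(α:ℂ) = (2*(M.b:ℂ)) * β := by
      rw [hβdef]; push_cast; field_simp
    rw [h2]
    exact mul_ne_zero (by simpa using hbC) hβ0
  have hD2 : (M.b:ℂ)*(M.a:ℂ)^2*2 + (M.b:ℂ)^3*(α:ℂ)^2*8 ≠ 0 := by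
    have : (M.b:ℂ)*(M.a:ℂ)^2*2 + (M.b:ℂ)^3*(α:ℂ)^2*8
        = 2*(M.b:ℂ) * ((4 * M.b ^ 2 * α ^ 2 + M.a ^ 2 : ℝ) : ℂ) := by push_cast; ring
    rw [this]
    exact mul_ne_zero (by simpa using hbC) hD
  have hint : ∀ t : ℝ, olctKernel M u t * Complex.exp (-(α : ℂ) * t ^ 2)
      = (((2 * Real.pi : ℝ) : ℂ) * Complex.I * (M.b : ℂ)) ^ (-(1 / 2 : ℂ)) *
        Complex.exp (β * (t : ℂ) ^ 2 + γ * (t : ℂ) + δ) := by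
    intro t
    have harg : (Complex.I / ((2 * M.b : ℝ) : ℂ)) *
        ((M.a * t ^ 2 + 2 * t * (M.τ - u) - 2 * u * (M.d * M.τ - M.b * M.η)
          + M.d * u ^ 2 + M.d * M.τ ^ 2 : ℝ) : ℂ) + (-(α : ℂ) * (t : ℂ) ^ 2)
        = β * (t : ℂ) ^ 2 + γ * (t : ℂ) + δ := by
      rw [hβdef, hγdef, hδdef]
      push_cast
      field_simp
      ring
    rw [olctKernel, mul_assoc, ← Complex.exp_add, harg]
  simp only [hint]
  rw [MeasureTheory.integral_const_mul, integral_cexp_quadratic hβlt]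
  -- exponent identity
  have hEq : δ - γ ^ 2 / (4 * β) = δ +
      ((((-1) / (2 * M.b) * (M.τ - u) ^ 2 : ℝ) : ℂ) *
        (((2 * M.b * α : ℝ) : ℂ) + Complex.I * (M.a : ℂ)) /
        (((4 * M.b ^ 2 * α ^ 2 + M.a ^ 2 : ℝ) : ℂ))) := by
    have : -(γ ^ 2) / (4 * β) = (((-1) / (2 * M.b) * (M.τ - u) ^ 2 : ℝ) : ℂ) *
        (((2 * M.b * α : ℝ) : ℂ) + Complex.I * (M.a : ℂ)) /
        (((4 * M.b ^ 2 * α ^ 2 + M.a ^ 2 : ℝ) : ℂ)) := by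
      rw [hγdef, hβdef]
      have h4 : 4 * (Complex.I * ((M.a / (2 * M.b) : ℝ) : ℂ) - (α : ℂ))
          = 2 * (Complex.I * (M.a:ℂ) - 2*(M.b:ℂ)*(α:ℂ)) / (M.b:ℂ) := by
        push_cast; field_simp; norm_num
      rw [h4]
      push_cast at hD ⊢
      rw [div_eq_div_iff (div_ne_zero (mul_ne_zero two_ne_zero hne) hbC) hD]
      field_simp
      linear_combination (-4 * (M.b:ℂ)^2 * (α:ℂ)^2 * ((M.τ:ℂ) - (u:ℂ))^2) * Complex.I_sq
    linear_combination this
  rw [hEq, Complex.exp_add]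
  -- constant identity
  have hconst : (((2 * Real.pi : ℝ) : ℂ) * Complex.I * (M.b : ℂ)) ^ (-(1 / 2 : ℂ)) *
      (((Real.pi : ℂ)) / -β) ^ ((1 / 2 : ℂ)) =
      ((M.a : ℂ) + 2 * Complex.I * (α : ℂ) * (M.b : ℂ)) ^ (-(1 / 2 : ℂ)) := by
    have hA : (((2 * Real.pi : ℝ) : ℂ) * Complex.I * (M.b : ℂ)) ≠ 0 := by
      apply mul_ne_zero (mul_ne_zero _ Complex.I_ne_zero) hbC
      exact Complex.ofReal_ne_zero.mpr (by positivity)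
    have hA' : (0:ℝ) ≤ (((2 * Real.pi : ℝ) : ℂ) * Complex.I * (M.b : ℂ)).re := by
      simp [Complex.mul_re, Complex.mul_im]
    have hB : 0 < (((Real.pi : ℂ)) / -β).re := by
      rw [Complex.div_re]
      have hn : 0 < Complex.normSq (-β) := Complex.normSq_pos.mpr (neg_ne_zero.mpr hβ0)
      simp only [Complex.neg_re, Complex.neg_im, hβre, hβim, Complex.ofReal_re,
        Complex.ofReal_im, neg_neg]
      rw [zero_mul, zero_div, add_zero]
      positivity
    have key := cpow_neg_half_mul hA hA' hB
    have hABC : (((2 * Real.pi : ℝ) : ℂ) * Complex.I * (M.b : ℂ)) / (((Real.pi : ℂ)) / -β)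
        = (M.a : ℂ) + 2 * Complex.I * (α : ℂ) * (M.b : ℂ) := by
      rw [hβdef]
      push_cast
      field_simp
      ring_nf
      simp only [Complex.I_sq]
      ring
    rw [hABC] at key
    exact key
  rw [← hconst]
  ring

/-- Closed-form 2D OLCT of the Gaussian f(t) = exp(−α₁t₁² − α₂t₂²). -/
theorem olct_gaussian (M₁ M₂ : OLCTParams)
    (hM₁ : M₁.a * M₁.d - M₁.b * M₁.c = 1) (hM₂ : M₂.a * M₂.d - M₂.b * M₂.c = 1)
    (hb₁ : M₁.b ≠ 0) (hb₂ : M₂.b ≠ 0)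
    (α₁ α₂ : ℝ) (hα₁ : 0 < α₁) (hα₂ : 0 < α₂) (u : ℝ × ℝ) :
    olct M₁ M₂ (fun t => Complex.exp (-((α₁ * t.1 ^ 2 + α₂ * t.2 ^ 2 : ℝ) : ℂ))) u =
      Complex.exp
          ((Complex.I / ((2 * M₁.b : ℝ) : ℂ)) *
              ((-2 * u.1 * (M₁.d * M₁.τ - M₁.b * M₁.η) + M₁.d * u.1 ^ 2 + M₁.d * M₁.τ ^ 2 : ℝ) : ℂ)
            + (Complex.I / ((2 * M₂.b : ℝ) : ℂ)) *
              ((-2 * u.2 * (M₂.d * M₂.τ - M₂.b * M₂.η) + M₂.d * u.2 ^ 2 + M₂.d * M₂.τ ^ 2 : ℝ) : ℂ)) *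
        Complex.exp
          ((((-1) / (2 * M₁.b) * (M₁.τ - u.1) ^ 2 : ℝ) : ℂ) *
              (((2 * M₁.b * α₁ : ℝ) : ℂ) + Complex.I * (M₁.a : ℂ)) /
              (((4 * M₁.b ^ 2 * α₁ ^ 2 + M₁.a ^ 2 : ℝ) : ℂ))
            + (((-1) / (2 * M₂.b) * (M₂.τ - u.2) ^ 2 : ℝ) : ℂ) *
              (((2 * M₂.b * α₂ : ℝ) : ℂ) + Complex.I * (M₂.a : ℂ)) /
              (((4 * M₂.b ^ 2 * α₂ ^ 2 + M₂.a ^ 2 : ℝ) : ℂ))) *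
        ((M₁.a : ℂ) + 2 * Complex.I * (α₁ : ℂ) * (M₁.b : ℂ)) ^ (-(1 / 2 : ℂ)) *
        ((M₂.a : ℂ) + 2 * Complex.I * (α₂ : ℂ) * (M₂.b : ℂ)) ^ (-(1 / 2 : ℂ)) := by
  have h1 := olct1d M₁ hb₁ α₁ hα₁ u.1
  have h2 := olct1d M₂ hb₂ α₂ hα₂ u.2
  rw [olct]
  have hsplit : ∀ t : ℝ × ℝ, olctKernel M₁ u.1 t.1 * olctKernel M₂ u.2 t.2 *
      Complex.exp (-((α₁ * t.1 ^ 2 + α₂ * t.2 ^ 2 : ℝ) : ℂ)) =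
      (olctKernel M₁ u.1 t.1 * Complex.exp (-(α₁ : ℂ) * (t.1 : ℂ) ^ 2)) *
      (olctKernel M₂ u.2 t.2 * Complex.exp (-(α₂ : ℂ) * (t.2 : ℂ) ^ 2)) := by
    intro t
    have hexp : Complex.exp (-((α₁ * t.1 ^ 2 + α₂ * t.2 ^ 2 : ℝ) : ℂ)) =
        Complex.exp (-(α₁ : ℂ) * (t.1 : ℂ) ^ 2) * Complex.exp (-(α₂ : ℂ) * (t.2 : ℂ) ^ 2) := by
      rw [← Complex.exp_add]
      congr 1
      push_cast
      ring
    rw [hexp]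
    ring
  simp only [hsplit]
  rw [MeasureTheory.Measure.volume_eq_prod,
    MeasureTheory.integral_prod_mul (fun x : ℝ => olctKernel M₁ u.1 x * Complex.exp (-(α₁:ℂ) * (x:ℂ) ^ 2))
      (fun x : ℝ => olctKernel M₂ u.2 x * Complex.exp (-(α₂:ℂ) * (x:ℂ) ^ 2)), h1, h2]
  rw [Complex.exp_add, Complex.exp_add]
  ring

end
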